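/- arXiv:2102.11728 — 2 statements merged into one kernel-verified Lean document; each statement's English description precedes it below -/
import Mathlib

section
/- Let G = (V, E, w) be a finite weighted graph with distinct edge weights and let G' = (V, E \ S, w) for some S ⊆ E. Then the number of edges of the minimum spanning forest of G' that are not edges of the minimum spanning forest of G is at most |S|, i.e., |MSF(G') \ MSF(G)| ≤ |S|. -/
open SimpleGraph

section MSFAux

namespace MSFAux

variable {V : Type*}

variable {V : Type*}

lemma le_G {G : SimpleGraph V} {s : Set (Sym2 V)} (h : s ⊆ G.edgeSet) :
    fromEdgeSet s ≤ G :=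
  le_trans (fromEdgeSet_mono h) (fromEdgeSet_edgeSet G).le


lemma reach_sup_edge {H : SimpleGraph V} {a b u v : V}
    (h : (H ⊔ fromEdgeSet {s(a,b)}).Reachable u v) :
    H.Reachable u v ∨ (H.Reachable u a ∧ H.Reachable b v) ∨
      (H.Reachable u b ∧ H.Reachable a v) := by
  obtain ⟨p⟩ := h
  induction p with
  | nil => exact Or.inl (Reachable.refl _)
  | cons hadj q ih =>
    rcases hadj with hH | hE
    · have r : H.Reachable _ _ := hH.reachable
      rcases ih with h1 | ⟨h2, h3⟩ | ⟨h2, h3⟩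
      · exact Or.inl (r.trans h1)
      · exact Or.inr (Or.inl ⟨r.trans h2, h3⟩)
      · exact Or.inr (Or.inr ⟨r.trans h2, h3⟩)
    · rw [fromEdgeSet_adj, Set.mem_singleton_iff, Sym2.eq_iff] at hE
      obtain ⟨hcase, hne⟩ := hE
      rcases hcase with ⟨rfl, rfl⟩ | ⟨rfl, rfl⟩
      · rcases ih with h1 | ⟨h2, h3⟩ | ⟨h2, h3⟩
        · exact Or.inr (Or.inl ⟨Reachable.refl _, h1⟩)
        · exact Or.inl (h2.symm.trans h3)
        · exact Or.inl h3
      · rcases ih with h1 | ⟨h2, h3⟩ | ⟨h2, h3⟩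
        · exact Or.inr (Or.inr ⟨Reachable.refl _, h1⟩)
        · exact Or.inl h3
        · exact Or.inl (h2.symm.trans h3)

lemma acyclic_sup_edge {H : SimpleGraph V} {a b : V} (hH : H.IsAcyclic) (hab : a ≠ b)
    (hr : ¬ H.Reachable a b) : (H ⊔ fromEdgeSet {s(a,b)}).IsAcyclic := by
  intro v c hc
  by_cases he : s(a,b) ∈ c.edges
  · have h2 := ((adj_and_reachable_delete_edges_iff_exists_cycle
      (G := H ⊔ fromEdgeSet {s(a,b)})).2 ⟨v, c, hc, he⟩).2
    have hle : (H ⊔ fromEdgeSet {s(a,b)}) \ fromEdgeSet {s(a,b)} ≤ H := by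
      rw [sup_sdiff_right_self]; exact sdiff_le
    exact hr (h2.mono hle)
  · have hsub : ∀ e ∈ c.edges, e ∈ H.edgeSet := by
      intro e hee
      have h3 := c.edges_subset_edgeSet hee
      rw [edgeSet_sup, edgeSet_fromEdgeSet] at h3
      rcases h3 with h1 | h2
      · exact h1
      · obtain ⟨h21, -⟩ := h2
        rw [Set.mem_singleton_iff] at h21
        subst h21
        exact (he hee).elim
    exact hH (c.transfer H hsub) (hc.transfer hsub)

instance finite_cc [Finite V] (H : SimpleGraph V) : Finite H.ConnectedComponent :=
  Quot.finite _

lemma card_cc_le_of_le [Finite V] {H K : SimpleGraph V} (h : H ≤ K) :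
    Nat.card K.ConnectedComponent ≤ Nat.card H.ConnectedComponent := by
  apply Nat.card_le_card_of_surjective (ConnectedComponent.map (Hom.ofLE h))
  intro c
  refine c.ind fun v => ⟨H.connectedComponentMk v, rfl⟩

lemma card_cc_eq_of_reach [Finite V] {H K : SimpleGraph V}
    (h : ∀ u v, H.Reachable u v ↔ K.Reachable u v) :
    Nat.card H.ConnectedComponent = Nat.card K.ConnectedComponent := by
  refine le_antisymm ?_ ?_
  · exact Nat.card_le_card_of_surjective
      (Quot.map id (fun u v r => (h u v).2 r) : K.ConnectedComponent → H.ConnectedComponent)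
      (ConnectedComponent.ind fun v => ⟨K.connectedComponentMk v, rfl⟩)
  · exact Nat.card_le_card_of_surjective
      (Quot.map id (fun u v r => (h u v).1 r) : H.ConnectedComponent → K.ConnectedComponent)
      (ConnectedComponent.ind fun v => ⟨H.connectedComponentMk v, rfl⟩)

open Classical in
lemma card_cc_sup_edge [Finite V] (H : SimpleGraph V) (a b : V) :
    Nat.card H.ConnectedComponent ≤
        Nat.card (H ⊔ fromEdgeSet {s(a,b)}).ConnectedComponent + 1 ∧
      (a ≠ b → ¬ H.Reachable a b →
        Nat.card H.ConnectedComponent =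
          Nat.card (H ⊔ fromEdgeSet {s(a,b)}).ConnectedComponent + 1) := by
  set K := H ⊔ fromEdgeSet {s(a,b)} with hK
  set f : H.ConnectedComponent → Option K.ConnectedComponent := fun x =>
    if x = H.connectedComponentMk b then none
    else some (x.map (Hom.ofLE le_sup_left)) with hf
  have hinj : Function.Injective f := by
    intro x y hxy
    by_cases hx : x = H.connectedComponentMk b <;>
      by_cases hy : y = H.connectedComponentMk b
    · rw [hx, hy]
    · simp only [hf, if_pos hx, if_neg hy] at hxy; exact absurd hxy (by simp)
    · simp only [hf, if_pos hy, if_neg hx] at hxy; exact absurd hxy (by simp)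
    · simp only [hf, if_neg hx, if_neg hy, Option.some_inj] at hxy
      induction x using ConnectedComponent.ind with | _ u =>
      induction y using ConnectedComponent.ind with | _ v =>
      simp only [ConnectedComponent.map_mk, Hom.ofLE_apply,
        ConnectedComponent.eq] at hxy
      rcases reach_sup_edge hxy with h1 | ⟨h2, h3⟩ | ⟨h2, h3⟩
      · exact ConnectedComponent.sound h1
      · exact absurd (ConnectedComponent.sound h3.symm) hy
      · exact absurd (ConnectedComponent.sound h2) hx
  haveI := Fintype.ofFinite K.ConnectedComponent
  constructor
  · calc Nat.card H.ConnectedComponent ≤ Nat.card (Option K.ConnectedComponent) :=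
          Nat.card_le_card_of_injective f hinj
      _ = Nat.card K.ConnectedComponent + 1 := Finite.card_option
  · intro hne hr
    have hsurj : Function.Surjective f := by
      rintro (_ | c)
      · exact ⟨H.connectedComponentMk b, by simp [hf]⟩
      · induction c using ConnectedComponent.ind with | _ v =>
        by_cases hv : H.Reachable b v
        · refine ⟨H.connectedComponentMk a, ?_⟩
          have hab : K.Adj a b := Or.inr (by rw [fromEdgeSet_adj]; simp [hne])
          have h1 : H.connectedComponentMk a ≠ H.connectedComponentMk b := by
            simpa using hr
          simp only [hf, if_neg h1, ConnectedComponent.map_mk,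
            Hom.ofLE_apply, Option.some_inj]
          exact ConnectedComponent.sound (hab.reachable.trans (hv.mono le_sup_left))
        · refine ⟨H.connectedComponentMk v, ?_⟩
          have h1 : H.connectedComponentMk v ≠ H.connectedComponentMk b := by
            simp only [ne_eq, ConnectedComponent.eq]
            exact fun h => hv h.symm
          simp [hf, if_neg h1]
    calc Nat.card H.ConnectedComponent = Nat.card (Option K.ConnectedComponent) :=
          Nat.card_eq_of_bijective f ⟨hinj, hsurj⟩
      _ = Nat.card K.ConnectedComponent + 1 := Finite.card_option

lemma card_cc_bot [Finite V] : Nat.card (⊥ : SimpleGraph V).ConnectedComponent = Nat.card V := by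
  symm
  apply Nat.card_eq_of_bijective (⊥ : SimpleGraph V).connectedComponentMk
  constructor
  · intro u v huv
    simpa using ConnectedComponent.exact huv
  · exact ConnectedComponent.ind fun v => ⟨v, rfl⟩

lemma isAcyclic_mono {H K : SimpleGraph V} (h : H ≤ K) (hK : K.IsAcyclic) : H.IsAcyclic := by
  intro v c hc
  exact hK (c.transfer K fun e he => edgeSet_mono h (c.edges_subset_edgeSet he))
    (hc.transfer _)

lemma card_lower [Finite V] (s : Set (Sym2 V)) :
    (∀ e ∈ s, ¬ e.IsDiag) →
      Nat.card V ≤ Nat.card (fromEdgeSet s).ConnectedComponent + s.ncard := by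
  refine Set.Finite.induction_on s (Set.toFinite s) (fun _ => ?_) ?_
  · simp [fromEdgeSet_empty, card_cc_bot]
  · intro a s ha hsf ih hd
    induction a using Sym2.ind with | _ x y =>
    have hne : x ≠ y := by
      have := hd s(x,y) (Set.mem_insert _ _)
      simpa [Sym2.isDiag_iff_proj_eq] using this
    have hins : fromEdgeSet (insert s(x,y) s) = fromEdgeSet s ⊔ fromEdgeSet {s(x,y)} := by
      rw [Set.insert_eq, Set.union_comm, fromEdgeSet_union]
    have h1 := (card_cc_sup_edge (fromEdgeSet s) x y).1
    have h2 := ih fun e he => hd e (Set.mem_insert_of_mem _ he)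
    rw [hins, Set.ncard_insert_of_notMem ha hsf]
    omega

lemma card_upper [Finite V] (s : Set (Sym2 V)) :
    (∀ e ∈ s, ¬ e.IsDiag) → (fromEdgeSet s).IsAcyclic →
      Nat.card (fromEdgeSet s).ConnectedComponent + s.ncard ≤ Nat.card V := by
  refine Set.Finite.induction_on s (Set.toFinite s) (fun _ _ => ?_) ?_
  · simp [fromEdgeSet_empty, card_cc_bot]
  · intro a s ha hsf ih hd hac
    induction a using Sym2.ind with | _ x y =>
    have hne : x ≠ y := by
      have := hd s(x,y) (Set.mem_insert _ _)
      simpa [Sym2.isDiag_iff_proj_eq] using this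
    have hins : fromEdgeSet (insert s(x,y) s) = fromEdgeSet s ⊔ fromEdgeSet {s(x,y)} := by
      rw [Set.insert_eq, Set.union_comm, fromEdgeSet_union]
    rw [hins] at hac
    have hle : fromEdgeSet s ≤ fromEdgeSet s ⊔ fromEdgeSet {s(x,y)} := le_sup_left
    have hac' : (fromEdgeSet s).IsAcyclic := isAcyclic_mono hle hac
    have hr : ¬ (fromEdgeSet s).Reachable x y := by
      intro r
      have hadj : (fromEdgeSet s ⊔ fromEdgeSet {s(x,y)}).Adj x y :=
        Or.inr (by rw [fromEdgeSet_adj]; simp [hne])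
      have hsd : fromEdgeSet s ≤
          (fromEdgeSet s ⊔ fromEdgeSet {s(x,y)}) \ fromEdgeSet {s(x,y)} := by
        rw [sup_sdiff_right_self, ← fromEdgeSet_sdiff, Set.diff_singleton_eq_self ha]
      obtain ⟨u, c, hc, -⟩ := (adj_and_reachable_delete_edges_iff_exists_cycle).1
        ⟨hadj, r.mono hsd⟩
      exact hac c hc
    have h1 := (card_cc_sup_edge (fromEdgeSet s) x y).2 hne hr
    have h2 := ih (fun e he => hd e (Set.mem_insert_of_mem _ he)) hac'
    rw [hins, Set.ncard_insert_of_notMem ha hsf]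
    omega

lemma exists_cross {H : SimpleGraph V} {a b : V} (p : H.Walk a b) (hp : p.IsPath)
    (A : Set V) (ha : a ∈ A) (hb : b ∉ A) :
    ∃ x y, x ∈ A ∧ y ∉ A ∧ H.Adj x y ∧ s(x,y) ∈ p.edges ∧
      (H \ fromEdgeSet {s(x,y)}).Reachable a x ∧
      (H \ fromEdgeSet {s(x,y)}).Reachable y b := by
  induction p with
  | nil => exact absurd ha hb
  | @cons u v w hadj q ih =>
    rw [Walk.cons_isPath_iff] at hp
    by_cases hv : v ∈ A
    · obtain ⟨x, y, hx, hy, hxy, hmem, r1, r2⟩ := ih hp.1 hv hb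
      have hux : u ≠ x := fun h => hp.2 (h ▸ Walk.fst_mem_support_of_mem_edges q hmem)
      have huy : u ≠ y := fun h => hp.2 (h ▸ Walk.snd_mem_support_of_mem_edges q hmem)
      have hedge : s(u,v) ≠ s(x,y) := by
        intro h
        rw [Sym2.eq_iff] at h
        rcases h with ⟨rfl, rfl⟩ | ⟨rfl, rfl⟩
        · exact hux rfl
        · exact huy rfl
      have hadj' : (H \ fromEdgeSet {s(x,y)}).Adj u v := by
        refine ⟨hadj, ?_⟩
        rw [fromEdgeSet_adj]
        rintro ⟨hm, -⟩
        exact hedge (Set.mem_singleton_iff.1 hm)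
      exact ⟨x, y, hx, hy, hxy, by simp [hmem], hadj'.reachable.trans r1, r2⟩
    · refine ⟨u, v, ha, hv, hadj, by simp, Reachable.refl _, ?_⟩
      have hne : ∀ e ∈ q.edges, e ∉ ({s(u,v)} : Set (Sym2 V)) := by
        intro e he hm
        rw [Set.mem_singleton_iff] at hm
        subst hm
        exact hp.2 (Walk.fst_mem_support_of_mem_edges q he)
      exact ⟨q.toDeleteEdges {s(u,v)} hne⟩

lemma finsum_swap_eq (w : Sym2 V → ℝ) {s : Set (Sym2 V)} (hs : s.Finite) {e f : Sym2 V}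
    (he : e ∈ s) (hf : f ∉ s) :
    ∑ᶠ x ∈ insert f (s \ {e}), w x = ∑ᶠ x ∈ s, w x - w e + w f := by
  have h1 : ∑ᶠ x ∈ insert f (s \ {e}), w x = w f + ∑ᶠ x ∈ s \ {e}, w x := by
    rw [Set.insert_eq, finsum_mem_union (by simp [Set.disjoint_singleton_left, hf])
      (Set.finite_singleton f) hs.diff, finsum_mem_singleton]
  have h2 : ∑ᶠ x ∈ s, w x = w e + ∑ᶠ x ∈ s \ {e}, w x := by
    conv_lhs => rw [show s = {e} ∪ (s \ {e}) by
      rw [← Set.insert_eq, Set.insert_diff_singleton, Set.insert_eq_of_mem he]]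
    rw [finsum_mem_union (by simp) (Set.finite_singleton e) hs.diff, finsum_mem_singleton]
  rw [h1, h2]; ring

end MSFAux

end MSFAux

open MSFAux


variable {V : Type*} [Fintype V]

/-- `F` is a minimum spanning forest of `G` w.r.t. the weight function `w`:
it is a set of edges of `G` forming an acyclic subgraph with the same
reachability relation as `G`, of minimum total weight among all such sets. -/
def IsMSF (G : SimpleGraph V) (w : Sym2 V → ℝ) (F : Set (Sym2 V)) : Prop :=
  F ⊆ G.edgeSet ∧ (SimpleGraph.fromEdgeSet F).IsAcyclic ∧
  (∀ u v : V, G.Reachable u v ↔ (SimpleGraph.fromEdgeSet F).Reachable u v) ∧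
  ∀ F' : Set (Sym2 V), F' ⊆ G.edgeSet → (SimpleGraph.fromEdgeSet F').IsAcyclic →
    (∀ u v : V, G.Reachable u v ↔ (SimpleGraph.fromEdgeSet F').Reachable u v) →
    ∑ᶠ e ∈ F, w e ≤ ∑ᶠ e ∈ F', w e

/-- `F` is a minimum spanning tree of the connected graph `G` w.r.t. `w`:
a set of edges of `G` forming a connected acyclic spanning subgraph,
of minimum total weight among all such sets. -/
def IsMST (G : SimpleGraph V) (w : Sym2 V → ℝ) (F : Set (Sym2 V)) : Prop :=
  F ⊆ G.edgeSet ∧ (SimpleGraph.fromEdgeSet F).IsAcyclic ∧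
  (SimpleGraph.fromEdgeSet F).Connected ∧
  ∀ F' : Set (Sym2 V), F' ⊆ G.edgeSet → (SimpleGraph.fromEdgeSet F').IsAcyclic →
    (SimpleGraph.fromEdgeSet F').Connected →
    ∑ᶠ e ∈ F, w e ≤ ∑ᶠ e ∈ F', w e

theorem msf_deleteEdges_diff_card_le (G : SimpleGraph V) (w : Sym2 V → ℝ)
    (hinj : Set.InjOn w G.edgeSet)
    (S : Set (Sym2 V)) (hS : S ⊆ G.edgeSet)
    (F F' : Set (Sym2 V))
    (hF : IsMSF G w F) (hF' : IsMSF (G.deleteEdges S) w F') :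
    (F' \ F).ncard ≤ S.ncard := by
  classical
  obtain ⟨hFsub, hFac, hFsp, hFopt⟩ := hF
  obtain ⟨hF'sub, hF'ac, hF'sp, hF'opt⟩ := hF'
  have hG'edge : (G.deleteEdges S).edgeSet = G.edgeSet \ S := edgeSet_deleteEdges S
  have hF'subG : F' ⊆ G.edgeSet := fun e he => (hG'edge ▸ hF'sub he).1
  have key : F \ S ⊆ F' := by
    rintro e ⟨heF, heS⟩
    by_contra heF'
    induction e using Sym2.ind with | _ a b =>
    have hGab : G.Adj a b := (mem_edgeSet _).1 (hFsub heF)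
    have hne : a ≠ b := hGab.ne
    have hG'ab : (G.deleteEdges S).Adj a b := by rw [deleteEdges_adj]; exact ⟨hGab, heS⟩
    have hTsplit : fromEdgeSet F =
        fromEdgeSet (F \ {s(a,b)}) ⊔ fromEdgeSet {s(a,b)} := by
      rw [← fromEdgeSet_union, Set.diff_union_self,
        Set.union_eq_self_of_subset_right (Set.singleton_subset_iff.2 heF)]
    have hT'ab : (fromEdgeSet F').Reachable a b := (hF'sp a b).1 hG'ab.reachable
    obtain ⟨p0⟩ := hT'ab
    obtain ⟨p, hp⟩ := p0.toPath
    set Te := fromEdgeSet (F \ {s(a,b)}) with hTe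
    set A : Set V := {v | Te.Reachable a v} with hA
    have haA : a ∈ A := Reachable.refl a
    have hbA : b ∉ A := by
      intro hb
      have hTadj : (fromEdgeSet F).Adj a b := by
        rw [hTsplit]; exact Or.inr ((fromEdgeSet_adj _).2 ⟨rfl, hne⟩)
      have hle : Te ≤ fromEdgeSet F \ fromEdgeSet {s(a,b)} := by
        rw [hTsplit, sup_sdiff_right_self, ← fromEdgeSet_sdiff, Set.diff_diff,
          Set.union_self]
      obtain ⟨u, c, hc, -⟩ := adj_and_reachable_delete_edges_iff_exists_cycle.1
        ⟨hTadj, (hb : Te.Reachable a b).mono hle⟩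
      exact hFac c hc
    obtain ⟨x, y, hxA, hyA, hxyadj, hmem, r1, r2⟩ := exists_cross p hp A haA hbA
    have hxyne : x ≠ y := hxyadj.ne
    have hf'F' : s(x,y) ∈ F' := ((fromEdgeSet_adj _).1 hxyadj).1
    have hf'ne : s(x,y) ≠ s(a,b) := fun h => heF' (h ▸ hf'F')
    have hraX : Te.Reachable a x := hxA
    have hf'F : s(x,y) ∉ F := by
      intro hmemF
      have hTexy : Te.Adj x y := (fromEdgeSet_adj _).2 ⟨⟨hmemF, hf'ne⟩, hxyne⟩
      exact hyA (hraX.trans hTexy.reachable)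
    have hTeA : Te.IsAcyclic :=
      isAcyclic_mono (fromEdgeSet_mono Set.diff_subset) hFac
    have hTexy : ¬ Te.Reachable x y := fun r => hyA (hraX.trans r)
    -- y is reachable from b in Te
    have hyB : Te.Reachable y b := by
      have hyGb : G.Reachable y b :=
        r2.mono (le_trans sdiff_le (le_G hF'subG))
      have h2 : (fromEdgeSet F).Reachable y b := (hFsp y b).1 hyGb
      rw [hTsplit] at h2
      rcases reach_sup_edge h2 with h | ⟨h1, h2⟩ | ⟨h1, h2⟩
      · exact h
      · exact absurd h1.symm hyA
      · exact h1
    -- first swap: F2 := insert s(x,y) (F \ {s(a,b)})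
    have hwlt : w s(a,b) < w s(x,y) := by
      set F2 := insert s(x,y) (F \ {s(a,b)}) with hF2
      have hF2sub : F2 ⊆ G.edgeSet := by
        rintro f (rfl | ⟨hf, -⟩)
        · exact hF'subG hf'F'
        · exact hFsub hf
      have hF2split : fromEdgeSet F2 = Te ⊔ fromEdgeSet {s(x,y)} := by
        rw [hF2, Set.insert_eq, Set.union_comm, fromEdgeSet_union]
      have hF2ac : (fromEdgeSet F2).IsAcyclic := by
        rw [hF2split]; exact acyclic_sup_edge hTeA hxyne hTexy
      have hTe_le : Te ≤ fromEdgeSet F2 := by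
        rw [hF2split]; exact le_sup_left
      have hadjF2 : (fromEdgeSet F2).Adj x y :=
        (fromEdgeSet_adj _).2 ⟨Set.mem_insert _ _, hxyne⟩
      have hF2ab : (fromEdgeSet F2).Reachable a b :=
        ((hraX.mono hTe_le).trans hadjF2.reachable).trans (hyB.mono hTe_le)
      have hF2sp : ∀ u v : V, G.Reachable u v ↔ (fromEdgeSet F2).Reachable u v := by
        intro u v
        constructor
        · intro r
          have h2 := (hFsp u v).1 r
          rw [hTsplit] at h2
          rcases reach_sup_edge h2 with h | ⟨h1, h2⟩ | ⟨h1, h2⟩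
          · exact h.mono hTe_le
          · exact ((h1.mono hTe_le).trans hF2ab).trans (h2.mono hTe_le)
          · exact ((h1.mono hTe_le).trans hF2ab.symm).trans (h2.mono hTe_le)
        · exact fun r => r.mono (le_G hF2sub)
      have hopt := hFopt F2 hF2sub hF2ac hF2sp
      rw [finsum_swap_eq w (Set.toFinite F) heF hf'F] at hopt
      have hle : w s(a,b) ≤ w s(x,y) := by linarith
      exact lt_of_le_of_ne hle fun h => hf'ne (hinj (hF'subG hf'F') (hFsub heF) h.symm)
    -- second swap: F3 := insert s(a,b) (F' \ {s(x,y)})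
    set F3 := insert s(a,b) (F' \ {s(x,y)}) with hF3
    have hF3sub : F3 ⊆ (G.deleteEdges S).edgeSet := by
      rintro f (rfl | ⟨hf, -⟩)
      · rw [hG'edge]; exact ⟨hFsub heF, heS⟩
      · exact hF'sub hf
    have hTf : fromEdgeSet (F' \ {s(x,y)}) = fromEdgeSet F' \ fromEdgeSet {s(x,y)} :=
      fromEdgeSet_sdiff _ _
    have hTfac : (fromEdgeSet (F' \ {s(x,y)})).IsAcyclic :=
      isAcyclic_mono (fromEdgeSet_mono Set.diff_subset) hF'ac
    have hbridge : ¬ (fromEdgeSet F' \ fromEdgeSet {s(x,y)}).Reachable x y :=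
      (isBridge_iff.1 (isAcyclic_iff_forall_edge_isBridge.1 hF'ac
        ((mem_edgeSet _).2 hxyadj)))
    have hTfab : ¬ (fromEdgeSet (F' \ {s(x,y)})).Reachable a b := by
      rw [hTf]
      intro r
      exact hbridge ((r1.symm.trans r).trans r2.symm)
    have hF3split : fromEdgeSet F3 = fromEdgeSet (F' \ {s(x,y)}) ⊔ fromEdgeSet {s(a,b)} := by
      rw [hF3, Set.insert_eq, Set.union_comm, fromEdgeSet_union]
    have hF3ac : (fromEdgeSet F3).IsAcyclic := by
      rw [hF3split]; exact acyclic_sup_edge hTfac hne hTfab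
    have hTf_le : fromEdgeSet (F' \ {s(x,y)}) ≤ fromEdgeSet F3 := by
      rw [hF3split]; exact le_sup_left
    have hadjF3 : (fromEdgeSet F3).Adj a b :=
      (fromEdgeSet_adj _).2 ⟨Set.mem_insert _ _, hne⟩
    have hr1' : (fromEdgeSet (F' \ {s(x,y)})).Reachable a x := hTf ▸ r1
    have hr2' : (fromEdgeSet (F' \ {s(x,y)})).Reachable y b := hTf ▸ r2
    have hF3xy : (fromEdgeSet F3).Reachable x y :=
      ((hr1'.symm.mono hTf_le).trans hadjF3.reachable).trans (hr2'.symm.mono hTf_le)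
    have hT'split : fromEdgeSet F' = fromEdgeSet (F' \ {s(x,y)}) ⊔ fromEdgeSet {s(x,y)} := by
      rw [← fromEdgeSet_union, Set.diff_union_self,
        Set.union_eq_self_of_subset_right (Set.singleton_subset_iff.2 hf'F')]
    have hF3sp : ∀ u v : V, (G.deleteEdges S).Reachable u v ↔ (fromEdgeSet F3).Reachable u v := by
      intro u v
      constructor
      · intro r
        have h2 := (hF'sp u v).1 r
        rw [hT'split] at h2
        rcases reach_sup_edge h2 with h | ⟨h1, h2⟩ | ⟨h1, h2⟩
        · exact h.mono hTf_le
        · exact ((h1.mono hTf_le).trans hF3xy).trans (h2.mono hTf_le)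
        · exact ((h1.mono hTf_le).trans hF3xy.symm).trans (h2.mono hTf_le)
      · exact fun r => r.mono (le_G hF3sub)
    have hopt := hF'opt F3 hF3sub hF3ac hF3sp
    rw [finsum_swap_eq w (Set.toFinite F') hf'F' heF'] at hopt
    linarith
  -- counting part
  have hFS : F \ F' ⊆ S := fun f hf => by_contra fun hfS => hf.2 (key ⟨hf.1, hfS⟩)
  have hnodiagF : ∀ e ∈ F, ¬ e.IsDiag := fun e he => G.not_isDiag_of_mem_edgeSet (hFsub he)
  have hnodiagF' : ∀ e ∈ F', ¬ e.IsDiag := fun e he =>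
    G.not_isDiag_of_mem_edgeSet (hF'subG he)
  have h1 := card_lower F hnodiagF
  have h2 := card_upper F' hnodiagF' hF'ac
  have h3 : Nat.card (fromEdgeSet F).ConnectedComponent = Nat.card G.ConnectedComponent :=
    card_cc_eq_of_reach fun u v => (hFsp u v).symm
  have h4 : Nat.card (fromEdgeSet F').ConnectedComponent =
      Nat.card (G.deleteEdges S).ConnectedComponent :=
    card_cc_eq_of_reach fun u v => (hF'sp u v).symm
  have h5 : Nat.card G.ConnectedComponent ≤ Nat.card (G.deleteEdges S).ConnectedComponent :=
    card_cc_le_of_le (deleteEdges_le S)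
  have h6 : F'.ncard ≤ F.ncard := by omega
  have e1 := Set.ncard_inter_add_ncard_diff_eq_ncard F' F (Set.toFinite F')
  have e2 := Set.ncard_inter_add_ncard_diff_eq_ncard F F' (Set.toFinite F)
  have e3 : (F ∩ F').ncard = (F' ∩ F).ncard := by rw [Set.inter_comm]
  have e4 : (F \ F').ncard ≤ S.ncard := Set.ncard_le_ncard hFS (Set.toFinite S)
  omega
end

section
/- Let G = (V, E, w) be a finite weighted graph with distinct edge weights, and let G' = (V, E', w) with E' ⊆ E. Every edge of MSF(G) is either an edge of MSF(G') or an edge of E \ E'. Equivalently, MSF(G) ⊆ MSF(G') ∪ (E \ E'). -/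
open SimpleGraph

variable {V : Type*} [Fintype V]

private lemma reach_transfer {K K2 : SimpleGraph V}
    (h : ∀ a b : V, K.Adj a b → K2.Reachable a b) {x y : V} (hxy : K.Reachable x y) :
    K2.Reachable x y := by
  obtain ⟨p⟩ := hxy
  induction p with
  | nil => exact Reachable.refl _
  | cons ha _ ih => exact (h _ _ ha).trans ih

private lemma reach_sup {K : SimpleGraph V} {a b x y : V}
    (h : (K ⊔ fromEdgeSet {s(a, b)}).Reachable x y) :
    K.Reachable x y ∨ (K.Reachable x a ∧ K.Reachable b y) ∨
      (K.Reachable x b ∧ K.Reachable a y) := by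
  obtain ⟨p⟩ := h
  induction p with
  | nil => exact Or.inl (Reachable.refl _)
  | @cons x z y ha p ih =>
    have hstep : K.Adj x z ∨ (x = a ∧ z = b) ∨ (x = b ∧ z = a) := by
      rcases ha with h | h
      · exact Or.inl h
      · rw [fromEdgeSet_adj, Set.mem_singleton_iff, Sym2.eq_iff] at h
        tauto
    rcases hstep with h | ⟨hx, hz⟩ | ⟨hx, hz⟩
    · rcases ih with h1 | ⟨h1, h2⟩ | ⟨h1, h2⟩
      · exact Or.inl (h.reachable.trans h1)
      · exact Or.inr (Or.inl ⟨h.reachable.trans h1, h2⟩)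
      · exact Or.inr (Or.inr ⟨h.reachable.trans h1, h2⟩)
    · subst hx; subst hz
      rcases ih with h1 | ⟨h1, h2⟩ | ⟨h1, h2⟩
      · exact Or.inr (Or.inl ⟨Reachable.refl _, h1⟩)
      · exact Or.inl (h1.symm.trans h2)
      · exact Or.inl h2
    · subst hx; subst hz
      rcases ih with h1 | ⟨h1, h2⟩ | ⟨h1, h2⟩
      · exact Or.inr (Or.inr ⟨Reachable.refl _, h1⟩)
      · exact Or.inl h2
      · exact Or.inl (h1.symm.trans h2)

private lemma acyclic_anti {H K : SimpleGraph V} (hle : H ≤ K) (hK : K.IsAcyclic) :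
    H.IsAcyclic := fun _ c hc => hK (c.mapLe hle) (hc.mapLe hle)

private lemma path_edge_split {K : SimpleGraph V} {u v : V} (p : K.Walk u v)
    (hp : p.IsPath) {f : Sym2 V} (hf : f ∈ p.edges) :
    ∃ x y : V, f = s(x, y) ∧ (K \ fromEdgeSet {f}).Reachable u x ∧
      (K \ fromEdgeSet {f}).Reachable y v := by
  induction p with
  | nil => simp at hf
  | @cons u z v ha q ih =>
    rw [Walk.edges_cons, List.mem_cons] at hf
    have hnd : s(u, z) ∉ q.edges := by
      have := hp.edges_nodup
      rw [Walk.edges_cons, List.nodup_cons] at this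
      exact this.1
    rcases hf with rfl | hf
    · refine ⟨u, z, rfl, Reachable.refl _, ?_⟩
      refine ⟨q.transfer _ fun e he => ?_⟩
      rw [edgeSet_sdiff, edgeSet_fromEdgeSet]
      refine ⟨q.edges_subset_edgeSet he, ?_⟩
      simp only [Set.mem_diff, Set.mem_singleton_iff, Set.mem_setOf_eq, not_and, not_not]
      intro hee
      exact absurd (hee ▸ he) hnd
    · obtain ⟨x, y, rfl, h1, h2⟩ := ih hp.of_cons hf
      refine ⟨x, y, rfl, Reachable.trans ?_ h1, h2⟩
      refine Adj.reachable ⟨ha, ?_⟩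
      rw [fromEdgeSet_adj]
      rintro ⟨heq, -⟩
      exact hnd (heq ▸ hf)

private lemma acyclic_sup {K : SimpleGraph V} {a b : V} (hK : K.IsAcyclic)
    (hab : ¬K.Reachable a b) (hne : a ≠ b) :
    (K ⊔ fromEdgeSet {s(a, b)}).IsAcyclic := by
  have hKab : ¬K.Adj a b := fun h => hab h.reachable
  rw [isAcyclic_iff_forall_adj_isBridge]
  intro x y hxy
  rw [isBridge_iff]
  refine fun (hreach : ((K ⊔ fromEdgeSet {s(a, b)}) \ fromEdgeSet {s(x, y)}).Reachable x y) => ?_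
  by_cases heq : s(x, y) = s(a, b)
  · have hgr : (K ⊔ fromEdgeSet {s(a, b)}) \ fromEdgeSet {s(x, y)} = K := by
      rw [heq]
      ext c d
      simp only [sdiff_adj, sup_adj, fromEdgeSet_adj, Set.mem_singleton_iff]
      constructor
      · rintro ⟨h | h, h2⟩
        · exact h
        · exact absurd h h2
      · intro h
        refine ⟨Or.inl h, fun hcd => ?_⟩
        rw [Sym2.eq_iff] at hcd
        rcases hcd.1 with ⟨rfl, rfl⟩ | ⟨rfl, rfl⟩
        · exact hKab h
        · exact hKab h.symm
    rw [hgr] at hreach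
    rw [Sym2.eq_iff] at heq
    rcases heq with ⟨rfl, rfl⟩ | ⟨rfl, rfl⟩
    · exact hab hreach
    · exact hab hreach.symm
  · have hadjK : K.Adj x y := by
      rcases hxy with h | h
      · exact h
      · rw [fromEdgeSet_adj, Set.mem_singleton_iff] at h
        exact absurd h.1 heq
    have hgr : (K ⊔ fromEdgeSet {s(a, b)}) \ fromEdgeSet {s(x, y)} =
        (K \ fromEdgeSet {s(x, y)}) ⊔ fromEdgeSet {s(a, b)} := by
      ext c d
      simp only [sdiff_adj, sup_adj, fromEdgeSet_adj, Set.mem_singleton_iff]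
      constructor
      · rintro ⟨h | h, h2⟩
        · exact Or.inl ⟨h, h2⟩
        · exact Or.inr h
      · rintro (⟨h1, h2⟩ | h)
        · exact ⟨Or.inl h1, h2⟩
        · refine ⟨Or.inr h, fun hcd => heq ?_⟩
          rw [← hcd.1, h.1]
    rw [hgr] at hreach
    have hle : K \ fromEdgeSet {s(x, y)} ≤ K := sdiff_le
    have hbr : ¬(K \ fromEdgeSet {s(x, y)}).Reachable x y :=
      (isBridge_iff.mp (isAcyclic_iff_forall_adj_isBridge.mp hK hadjK))
    rcases reach_sup hreach with h | ⟨h1, h2⟩ | ⟨h1, h2⟩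
    · exact hbr h
    · exact hab (((h1.mono hle).symm.trans hadjK.reachable).trans (h2.mono hle).symm)
    · exact hab (((h2.mono hle).trans hadjK.reachable.symm).trans (h1.mono hle))

private lemma finsum_split {S : Set (Sym2 V)} {f : Sym2 V} (hf : f ∈ S)
    (w : Sym2 V → ℝ) : ∑ᶠ e ∈ S, w e = w f + ∑ᶠ e ∈ S \ {f}, w e := by
  have hS : S = insert f (S \ {f}) := by
    rw [Set.insert_diff_singleton, Set.insert_eq_of_mem hf]
  conv_lhs => rw [hS]
  exact finsum_mem_insert _ (fun h => h.2 rfl) (Set.toFinite _)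

private lemma msf_exchange {G' : SimpleGraph V} {w : Sym2 V → ℝ}
    {F' : Set (Sym2 V)} (hF' : IsMSF G' w F') {u v : V} (he : G'.Adj u v)
    (heF : s(u, v) ∉ F') {p : (SimpleGraph.fromEdgeSet F').Walk u v} (hp : p.IsPath)
    {f : Sym2 V} (hf : f ∈ p.edges) : w f ≤ w s(u, v) := by
  obtain ⟨hsub, hacy, hspan, hmin⟩ := hF'
  have hfF : f ∈ F' := ((edgeSet_fromEdgeSet F') ▸ p.edges_subset_edgeSet hf).1
  obtain ⟨x, y, rfl, h1, h2⟩ := path_edge_split p hp hf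
  have hxyadj : (fromEdgeSet F').Adj x y := (mem_edgeSet _).mp (p.edges_subset_edgeSet hf)
  have hne : u ≠ v := he.ne
  have hbrxy : ¬((fromEdgeSet F') \ fromEdgeSet {s(x, y)}).Reachable x y :=
    (isBridge_iff.mp (isAcyclic_iff_forall_adj_isBridge.mp hacy hxyadj))
  have hnr : ¬((fromEdgeSet F') \ fromEdgeSet {s(x, y)}).Reachable u v :=
    fun h => hbrxy (h1.symm.trans (h.trans h2.symm))
  set F2 : Set (Sym2 V) := insert s(u, v) (F' \ {s(x, y)}) with hF2
  have hgr : fromEdgeSet F2 = ((fromEdgeSet F') \ fromEdgeSet {s(x, y)})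
      ⊔ fromEdgeSet {s(u, v)} := by
    rw [hF2, Set.insert_eq, fromEdgeSet_union, fromEdgeSet_sdiff, sup_comm]
  have hsub2 : F2 ⊆ G'.edgeSet := by
    rintro g hg
    rcases Set.mem_insert_iff.mp hg with rfl | hg
    · exact (mem_edgeSet _).mpr he
    · exact hsub hg.1
  have acyc2 : (fromEdgeSet F2).IsAcyclic :=
    hgr ▸ acyclic_sup (acyclic_anti sdiff_le hacy) hnr hne
  have hKfle2 : (fromEdgeSet F') \ fromEdgeSet {s(x, y)} ≤ fromEdgeSet F2 :=
    hgr ▸ le_sup_left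
  have huv2 : (fromEdgeSet F2).Adj u v := by
    rw [fromEdgeSet_adj]; exact ⟨Set.mem_insert _ _, hne⟩
  have hreachxy2 : (fromEdgeSet F2).Reachable x y :=
    ((h1.mono hKfle2).symm.trans huv2.reachable).trans (h2.mono hKfle2).symm
  have hadjtrans : ∀ a b : V, (fromEdgeSet F').Adj a b → (fromEdgeSet F2).Reachable a b := by
    intro a b hab
    by_cases hab2 : s(a, b) = s(x, y)
    · rw [Sym2.eq_iff] at hab2
      rcases hab2 with ⟨rfl, rfl⟩ | ⟨rfl, rfl⟩
      · exact hreachxy2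
      · exact hreachxy2.symm
    · refine Adj.reachable (hKfle2 ⟨hab, ?_⟩)
      rw [fromEdgeSet_adj]
      rintro ⟨hm, -⟩
      exact hab2 hm
  have span2 : ∀ a b : V, G'.Reachable a b ↔ (fromEdgeSet F2).Reachable a b := by
    intro a b
    constructor
    · intro h
      exact reach_transfer hadjtrans ((hspan a b).mp h)
    · intro h
      exact h.mono ((fromEdgeSet_mono hsub2).trans (le_of_eq (fromEdgeSet_edgeSet G')))
  have hkey := hmin F2 hsub2 acyc2 span2
  have hs1 : ∑ᶠ g ∈ F', w g = w s(x, y) + ∑ᶠ g ∈ F' \ {s(x, y)}, w g := finsum_split hfF w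
  have hs2 : ∑ᶠ g ∈ F2, w g = w s(u, v) + ∑ᶠ g ∈ F' \ {s(x, y)}, w g :=
    finsum_mem_insert _ (fun h => heF h.1) (Set.toFinite _)
  rw [hs1, hs2] at hkey
  linarith


theorem msf_subset_msf_union_removed (G G' : SimpleGraph V) (w : Sym2 V → ℝ)
    (hle : G' ≤ G) (hinj : Set.InjOn w G.edgeSet)
    (F F' : Set (Sym2 V))
    (hF : IsMSF G w F) (hF' : IsMSF G' w F') :
    F ⊆ F' ∪ (G.edgeSet \ G'.edgeSet) := by
  intro e heF
  by_cases hG'e : e ∈ G'.edgeSet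
  swap
  · exact Set.mem_union_right _ ⟨hF.1 heF, hG'e⟩
  by_cases heF' : e ∈ F'
  · exact Set.mem_union_left _ heF'
  exfalso
  classical
  induction e using Sym2.ind with
  | _ u v =>
  obtain ⟨hsubF, hacyF, hspanF, hminF⟩ := hF
  have hG'adj : G'.Adj u v := (mem_edgeSet _).mp hG'e
  have hne : u ≠ v := hG'adj.ne
  have hKadj : (fromEdgeSet F).Adj u v := by
    rw [fromEdgeSet_adj]; exact ⟨heF, hne⟩
  have hbr : ¬((fromEdgeSet F) \ fromEdgeSet {s(u, v)}).Reachable u v :=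
    (isBridge_iff.mp (isAcyclic_iff_forall_adj_isBridge.mp hacyF hKadj))
  have hreach' : (fromEdgeSet F').Reachable u v := (hF'.2.2.1 u v).mp hG'adj.reachable
  obtain ⟨q⟩ := hreach'
  set p := q.toPath with hpdef
  set S : Set V := {z | ((fromEdgeSet F) \ fromEdgeSet {s(u, v)}).Reachable u z} with hSdef
  obtain ⟨d, hd, hdS, hdS'⟩ := Walk.exists_boundary_dart p.1 S (Reachable.refl u) hbr
  have hfmem : s(d.fst, d.snd) ∈ p.1.edges := List.mem_map_of_mem (f := Dart.edge) hd
  have hfF' : s(d.fst, d.snd) ∈ F' := ((edgeSet_fromEdgeSet F') ▸ p.1.edges_subset_edgeSet hfmem).1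
  have hxyne : d.fst ≠ d.snd := d.fst_ne_snd
  have hfG : s(d.fst, d.snd) ∈ G.edgeSet := edgeSet_mono hle (hF'.1 hfF')
  have heG : s(u, v) ∈ G.edgeSet := edgeSet_mono hle hG'e
  have hwlt : w s(d.fst, d.snd) < w s(u, v) := by
    refine lt_of_le_of_ne (msf_exchange hF' hG'adj heF' p.2 hfmem) fun hw => heF' ?_
    have := hinj hfG heG hw
    exact this ▸ hfF'
  have hfnotF : s(d.fst, d.snd) ∉ F \ {s(u, v)} := by
    rintro ⟨hmem, hne2⟩
    refine hdS' (hdS.trans (Adj.reachable ⟨?_, ?_⟩))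
    · rw [fromEdgeSet_adj]; exact ⟨hmem, hxyne⟩
    · rw [fromEdgeSet_adj]
      rintro ⟨hm, -⟩
      exact hne2 hm
  have hnrxy : ¬((fromEdgeSet F) \ fromEdgeSet {s(u, v)}).Reachable d.fst d.snd :=
    fun h => hdS' (hdS.trans h)
  set F2 : Set (Sym2 V) := insert s(d.fst, d.snd) (F \ {s(u, v)}) with hF2def
  have hgr : fromEdgeSet F2 = ((fromEdgeSet F) \ fromEdgeSet {s(u, v)})
      ⊔ fromEdgeSet {s(d.fst, d.snd)} := by
    rw [hF2def, Set.insert_eq, fromEdgeSet_union, fromEdgeSet_sdiff, sup_comm]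
  have hsub2 : F2 ⊆ G.edgeSet := by
    rintro g hg
    rcases Set.mem_insert_iff.mp hg with rfl | hg
    · exact hfG
    · exact hsubF hg.1
  have acyc2 : (fromEdgeSet F2).IsAcyclic :=
    hgr ▸ acyclic_sup (acyclic_anti sdiff_le hacyF) hnrxy hxyne
  have hKele : (fromEdgeSet F) \ fromEdgeSet {s(u, v)} ≤ fromEdgeSet F2 := hgr ▸ le_sup_left
  have hKeq : (fromEdgeSet F) = ((fromEdgeSet F) \ fromEdgeSet {s(u, v)})
      ⊔ fromEdgeSet {s(u, v)} := by
    rw [sdiff_sup_cancel]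
    exact (fromEdgeSet_mono (Set.singleton_subset_iff.mpr heF))
  have hKleG : fromEdgeSet F ≤ G :=
    (fromEdgeSet_mono hsubF).trans (le_of_eq (fromEdgeSet_edgeSet G))
  have hK'leG : fromEdgeSet F' ≤ G :=
    ((fromEdgeSet_mono hF'.1).trans (le_of_eq (fromEdgeSet_edgeSet G'))).trans hle
  have hyv : ((fromEdgeSet F) \ fromEdgeSet {s(u, v)}).Reachable d.snd v := by
    have hGyv : G.Reachable d.snd v :=
      ((hK'leG d.adj.symm).reachable.trans
        ((hdS.mono sdiff_le).mono hKleG).symm).trans ((mem_edgeSet _).mp heG).reachable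
    have hKyv := (hspanF d.snd v).mp hGyv
    rw [hKeq] at hKyv
    rcases reach_sup hKyv with h | ⟨h1, -⟩ | ⟨h1, -⟩
    · exact h
    · exact absurd h1.symm (fun h => hdS' h)
    · exact h1
  have huv2reach : (fromEdgeSet F2).Reachable u v := by
    have hadj2 : (fromEdgeSet F2).Adj d.fst d.snd := by
      rw [fromEdgeSet_adj]; exact ⟨Set.mem_insert _ _, hxyne⟩
    exact ((hdS.mono hKele).trans hadj2.reachable).trans (hyv.mono hKele)
  have hadjtrans : ∀ a b : V, (fromEdgeSet F).Adj a b → (fromEdgeSet F2).Reachable a b := by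
    intro a b hab
    by_cases hab2 : s(a, b) = s(u, v)
    · rw [Sym2.eq_iff] at hab2
      rcases hab2 with ⟨rfl, rfl⟩ | ⟨rfl, rfl⟩
      · exact huv2reach
      · exact huv2reach.symm
    · refine Adj.reachable (hKele ⟨hab, ?_⟩)
      rw [fromEdgeSet_adj]
      rintro ⟨hm, -⟩
      exact hab2 hm
  have span2 : ∀ a b : V, G.Reachable a b ↔ (fromEdgeSet F2).Reachable a b := by
    intro a b
    constructor
    · intro h
      exact reach_transfer hadjtrans ((hspanF a b).mp h)
    · intro h
      exact h.mono ((fromEdgeSet_mono hsub2).trans (le_of_eq (fromEdgeSet_edgeSet G)))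
  have hkey := hminF F2 hsub2 acyc2 span2
  have hs1 : ∑ᶠ g ∈ F, w g = w s(u, v) + ∑ᶠ g ∈ F \ {s(u, v)}, w g := finsum_split heF w
  have hs2 : ∑ᶠ g ∈ F2, w g = w s(d.fst, d.snd) + ∑ᶠ g ∈ F \ {s(u, v)}, w g :=
    finsum_mem_insert _ hfnotF (Set.toFinite _)
  rw [hs1, hs2] at hkey
  linarith
end
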